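/- Let H be a symmetric positive semidefinite linear operator on a product space X = X₁ × ⋯ × X_s with block decomposition H = D + U + U*, where D = Diag(H₁₁,…,H_ss) is the block diagonal part with each H_ii symmetric positive definite and U is the strict block upper triangular part. Then H + T = (D + U) D⁻¹ (D + U*) where T := U D⁻¹ U*, and H + T is symmetric positive definite. -/

import Mathlib

open Matrix

theorem stmt_2 {N s : ℕ} (b : Fin N → Fin s)
    (H D U : Matrix (Fin N) (Fin N) ℝ)
    (hH : H.PosSemidef)
    (hdecomp : H = D + U + Uᵀ)
    (hD : D.PosDef)
    (hDdiag : ∀ i j, b i ≠ b j → D i j = 0)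
    (hU : ∀ i j, b j ≤ b i → U i j = 0) :
    H + U * D⁻¹ * Uᵀ = (D + U) * D⁻¹ * (D + Uᵀ) ∧ (H + U * D⁻¹ * Uᵀ).PosDef := by
  have hDet : IsUnit D.det := hD.det_pos.ne'.isUnit
  have e1 : D * D⁻¹ = 1 := Matrix.mul_nonsing_inv D hDet
  have e2 : D⁻¹ * D = 1 := Matrix.nonsing_inv_mul D hDet
  have hDt : Dᵀ = D := by
    ext i j
    have := congrFun (congrFun hD.isHermitian i) j
    simpa using this
  -- the factorization identity
  have heq : H + U * D⁻¹ * Uᵀ = (D + U) * D⁻¹ * (D + Uᵀ) := by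
    have expand : (D + U) * D⁻¹ * (D + Uᵀ) =
        D * D⁻¹ * D + D * D⁻¹ * Uᵀ + U * D⁻¹ * D + U * D⁻¹ * Uᵀ := by
      noncomm_ring
    rw [expand, e1, one_mul, one_mul, mul_assoc U D⁻¹ D, e2, mul_one, hdecomp]
    abel
  -- D + U is invertible
  have hinj : Function.Injective ((D + U).mulVec) := by
    have hker : ∀ x : Fin N → ℝ, (D + U) *ᵥ x = 0 → x = 0 := by
      intro x hx
      by_contra hxne
      set T := Finset.univ.filter (fun i => x i ≠ 0) with hT
      have hTne : T.Nonempty := by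
        obtain ⟨i, hi⟩ := Function.ne_iff.mp hxne
        exact ⟨i, by simp only [hT, Finset.mem_filter, Finset.mem_univ, true_and]; simpa using hi⟩
      set m := T.sup' hTne b with hm
      have hle : ∀ j, x j ≠ 0 → b j ≤ m :=
        fun j hj => Finset.le_sup' b (by simp [hT, hj])
      obtain ⟨i₀, hi₀T, hi₀⟩ := Finset.exists_mem_eq_sup' hTne b
      set y : Fin N → ℝ := fun i => if b i = m then x i else 0 with hy
      have hyne : y ≠ 0 := by
        intro h0
        have hx0 : x i₀ ≠ 0 := by simpa [hT] using hi₀T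
        have : y i₀ = 0 := congrFun h0 i₀
        rw [hy] at this
        simp only [hi₀.symm, if_pos rfl] at this
        exact hx0 (by rwa [if_pos hm.symm] at this)
      have hkey : ∀ i, b i = m → (D *ᵥ y) i = 0 := by
        intro i hi
        have hDy : (D *ᵥ y) i = (D *ᵥ x) i := by
          simp only [mulVec, dotProduct]
          refine Finset.sum_congr rfl fun j _ => ?_
          by_cases hbj : b j = m
          · simp [hy, hbj]
          · rw [hDdiag i j (by rw [hi]; exact fun h => hbj h.symm)]
            simp
        have hUx : (U *ᵥ x) i = 0 := by
          simp only [mulVec, dotProduct]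
          refine Finset.sum_eq_zero fun j _ => ?_
          by_cases hbj : b j ≤ b i
          · rw [hU i j hbj, zero_mul]
          · have : x j = 0 := by
              by_contra hxj
              exact hbj (hi ▸ hle j hxj)
            rw [this, mul_zero]
        have := congrFun hx i
        rw [add_mulVec] at this
        simp only [Pi.add_apply, Pi.zero_apply] at this
        rw [hDy]
        linarith [this, hUx]
      have hdot : star y ⬝ᵥ (D *ᵥ y) = 0 := by
        simp only [dotProduct]
        refine Finset.sum_eq_zero fun i _ => ?_
        by_cases hbi : b i = m
        · rw [hkey i hbi, mul_zero]
        · simp [hy, hbi]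
      have := hD.dotProduct_mulVec_pos hyne
      rw [hdot] at this
      exact lt_irrefl _ this
    intro a c hac
    have : (D + U) *ᵥ (a - c) = 0 := by
      rw [mulVec_sub, hac, sub_self]
    have := hker _ this
    exact sub_eq_zero.mp this
  have hUnit : IsUnit (D + U) := Matrix.mulVec_injective_iff_isUnit.mp hinj
  have hUnitT : IsUnit (D + Uᵀ) := by
    have h : D + Uᵀ = (D + U)ᵀ := by rw [transpose_add, hDt]
    rw [h, Matrix.isUnit_transpose]
    exact hUnit
  have hinjT : Function.Injective ((D + Uᵀ).mulVec) :=
    Matrix.mulVec_injective_iff_isUnit.mpr hUnitT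
  refine ⟨heq, ?_⟩
  rw [heq]
  -- conjTranspose facts over ℝ
  have hDsym : ∀ i j, D j i = D i j := fun i j => congrFun (congrFun hDt i) j
  have hC : (D + Uᵀ)ᴴ = D + U := by
    ext i j
    show star ((D + Uᵀ) j i) = (D + U) i j
    simp only [Matrix.add_apply, Matrix.transpose_apply, star_trivial, hDsym i j]
  rw [posDef_iff_dotProduct_mulVec]
  constructor
  · -- Hermitian
    show ((D + U) * D⁻¹ * (D + Uᵀ))ᴴ = _
    rw [conjTranspose_mul, conjTranspose_mul, hC]
    have h2 : (D + U)ᴴ = D + Uᵀ := by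
      ext i j
      show star ((D + U) j i) = (D + Uᵀ) i j
      simp only [Matrix.add_apply, Matrix.transpose_apply, star_trivial, hDsym i j]
    have h3 : (D⁻¹)ᴴ = D⁻¹ := hD.inv.isHermitian
    rw [h2, h3, mul_assoc]
  · intro x hx
    have hCx : (D + Uᵀ) *ᵥ x ≠ 0 := by
      intro h0
      apply hx
      have : (D + Uᵀ) *ᵥ x = (D + Uᵀ) *ᵥ 0 := by rw [h0, mulVec_zero]
      exact hinjT this
    have := hD.inv.dotProduct_mulVec_pos hCx
    have hrw : (D + U) * D⁻¹ * (D + Uᵀ) = (D + Uᵀ)ᴴ * D⁻¹ * (D + Uᵀ) := by rw [hC]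
    rw [hrw]
    simpa only [star_mulVec, dotProduct_mulVec, vecMul_vecMul] using this
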